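/- arXiv:1702.01173 — 5 statements merged into one kernel-verified Lean document; each statement's English description precedes it below -/
import Mathlib

section
/- Let n ≥ 2 and d ≥ 1, and let φ be a ℂ-algebra automorphism of the invariant ring ℂ[x_1,…,x_n]^{μ_d}. Then for all i ≠ j the polynomials φ(x_i^d) and φ(x_j^d) are coprime in ℂ[x_1,…,x_n], i.e. every common divisor of φ(x_i^d) and φ(x_j^d) in ℂ[x_1,…,x_n] is a nonzero constant. -/
open MvPolynomial

/-- The action of a scalar `ζ` on `ℂ[x_1,…,x_n]` scaling all variables simultaneously,
`f ↦ f(ζx_1,…,ζx_n)`. -/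
noncomputable def scaleAct (n : ℕ) (ζ : ℂ) :
    MvPolynomial (Fin n) ℂ →ₐ[ℂ] MvPolynomial (Fin n) ℂ :=
  aeval (fun i => C ζ * X i)

/-- The invariant ring `R = ℂ[x_1,…,x_n]^{μ_d}`. -/
noncomputable def invRing (n d : ℕ) : Subalgebra ℂ (MvPolynomial (Fin n) ℂ) where
  carrier := {f | ∀ ζ : ℂ, ζ ^ d = 1 → scaleAct n ζ f = f}
  mul_mem' := fun hf hg ζ hζ => by rw [map_mul, hf ζ hζ, hg ζ hζ]
  add_mem' := fun hf hg ζ hζ => by rw [map_add, hf ζ hζ, hg ζ hζ]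
  algebraMap_mem' := fun c ζ hζ => (scaleAct n ζ).commutes c

theorem X_pow_mem (n d : ℕ) (i : Fin n) :
    (X i : MvPolynomial (Fin n) ℂ) ^ d ∈ invRing n d := by
  intro ζ hζ
  simp [scaleAct, mul_pow, ← C_pow, hζ]

/- ### Auxiliary lemmas -/

lemma scaleAct_X (n : ℕ) (a : ℂ) (k : Fin n) :
    scaleAct n a (X k) = C a * X k := by simp [scaleAct]

lemma scaleAct_C (n : ℕ) (a c : ℂ) :
    scaleAct n a (C c) = C c := by simp [scaleAct]

lemma scaleAct_scaleAct (n : ℕ) (a b : ℂ) (f : MvPolynomial (Fin n) ℂ) :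
    scaleAct n a (scaleAct n b f) = scaleAct n (a * b) f := by
  have : (scaleAct n a).comp (scaleAct n b) = scaleAct n (a * b) := by
    apply MvPolynomial.algHom_ext
    intro k
    simp only [AlgHom.comp_apply, scaleAct_X, map_mul, scaleAct_C, C_mul]
    ring
  exact congrFun (congrArg DFunLike.coe this) f

lemma scaleAct_one_apply (n : ℕ) (f : MvPolynomial (Fin n) ℂ) :
    scaleAct n 1 f = f := by
  have : scaleAct n 1 = AlgHom.id ℂ (MvPolynomial (Fin n) ℂ) := by
    apply MvPolynomial.algHom_ext
    intro k
    simp [scaleAct_X]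
  rw [this]; rfl

lemma scaleAct_ne_zero (n : ℕ) {ζ : ℂ} (hζ : ζ ≠ 0) {f : MvPolynomial (Fin n) ℂ}
    (hf : f ≠ 0) : scaleAct n ζ f ≠ 0 := by
  intro h
  apply hf
  have := congrArg (scaleAct n ζ⁻¹) h
  rwa [scaleAct_scaleAct, inv_mul_cancel₀ hζ, scaleAct_one_apply, map_zero] at this

/-- The "set `x_i := 0`" algebra endomorphism. -/
noncomputable def killVar (n : ℕ) (i : Fin n) :
    MvPolynomial (Fin n) ℂ →ₐ[ℂ] MvPolynomial (Fin n) ℂ :=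
  aeval (fun k => if k = i then 0 else X k)

lemma killVar_idem (n : ℕ) (i : Fin n) (f : MvPolynomial (Fin n) ℂ) :
    killVar n i (killVar n i f) = killVar n i f := by
  have : (killVar n i).comp (killVar n i) = killVar n i := by
    apply MvPolynomial.algHom_ext
    intro k
    by_cases h : k = i <;> simp [killVar, h]
  exact congrFun (congrArg DFunLike.coe this) f

lemma X_dvd_sub_killVar (n : ℕ) (i : Fin n) (f : MvPolynomial (Fin n) ℂ) :
    (X i : MvPolynomial (Fin n) ℂ) ∣ f - killVar n i f := by
  induction f using MvPolynomial.induction_on with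
  | C c => simp [killVar]
  | add f g hf hg =>
      have : f + g - killVar n i (f + g) = (f - killVar n i f) + (g - killVar n i g) := by
        rw [map_add]; ring
      rw [this]; exact dvd_add hf hg
  | mul_X f k hf =>
      by_cases h : k = i
      · subst h
        have : f * X k - killVar n k (f * X k) = f * X k := by
          simp [killVar, map_mul]
        rw [this]; exact Dvd.intro_left f rfl
      · have : f * X k - killVar n i (f * X k) = (f - killVar n i f) * X k := by
          rw [map_mul]
          have : killVar n i (X k) = X k := by simp [killVar, h]
          rw [this]; ring
        rw [this]
        exact Dvd.dvd.mul_right hf _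

lemma X_dvd_iff_killVar (n : ℕ) (i : Fin n) (f : MvPolynomial (Fin n) ℂ) :
    (X i : MvPolynomial (Fin n) ℂ) ∣ f ↔ killVar n i f = 0 := by
  constructor
  · rintro ⟨t, rfl⟩
    rw [map_mul]
    have : killVar n i (X i) = 0 := by simp [killVar]
    rw [this, zero_mul]
  · intro h
    have := X_dvd_sub_killVar n i f
    rwa [h, sub_zero] at this

lemma prime_X_mv (n : ℕ) (i : Fin n) : Prime (X i : MvPolynomial (Fin n) ℂ) := by
  refine ⟨X_ne_zero i, ?_, ?_⟩
  · intro h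
    have h1 : (X i : MvPolynomial (Fin n) ℂ) ∣ 1 := h.dvd
    rw [X_dvd_iff_killVar, map_one] at h1
    exact one_ne_zero h1
  · intro a b hab
    rw [X_dvd_iff_killVar, map_mul] at hab
    rcases mul_eq_zero.mp hab with h | h
    · exact Or.inl ((X_dvd_iff_killVar n i a).mpr h)
    · exact Or.inr ((X_dvd_iff_killVar n i b).mpr h)

lemma isUnit_mv_eq_C : ∀ (k : ℕ) (f : MvPolynomial (Fin k) ℂ), IsUnit f →
    ∃ c : ℂ, c ≠ 0 ∧ f = C c := by
  intro k
  induction k with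
  | zero =>
      intro f hf
      refine ⟨f.coeff 0, ?_, MvPolynomial.eq_C_of_isEmpty f⟩
      intro h0
      rw [MvPolynomial.eq_C_of_isEmpty f, h0, map_zero] at hf
      exact not_isUnit_zero hf
  | succ m ih =>
      intro f hf
      have h1 : IsUnit (MvPolynomial.finSuccEquiv ℂ m f) := hf.map _
      obtain ⟨r, hr, hrf⟩ := Polynomial.isUnit_iff.mp h1
      obtain ⟨c, hc, rfl⟩ := ih r hr
      refine ⟨c, hc, ?_⟩
      apply (MvPolynomial.finSuccEquiv ℂ m).injective
      rw [← hrf]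
      simp [MvPolynomial.finSuccEquiv_apply]

/-- divisibility in `ℂ[x]` between invariants lifts to the invariant ring. -/
lemma dvd_invRing (n d : ℕ) {f g : MvPolynomial (Fin n) ℂ} (hf : f ∈ invRing n d)
    (hg : g ∈ invRing n d) (hf0 : f ≠ 0) (hdvd : f ∣ g) :
    (⟨f, hf⟩ : invRing n d) ∣ ⟨g, hg⟩ := by
  obtain ⟨h, rfl⟩ := hdvd
  have hh : h ∈ invRing n d := by
    intro ζ hζ
    have h1 : f * h = f * scaleAct n ζ h := by
      conv_lhs => rw [← hg ζ hζ]
      rw [map_mul, hf ζ hζ]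
    exact (mul_left_cancel₀ hf0 h1.symm)
  exact ⟨⟨h, hh⟩, Subtype.ext rfl⟩

/-- A common divisor (in the invariant ring) of `x_i^{dm}` and `x_j^{dm}` is a unit. -/
lemma common_divisor_isUnit (n d : ℕ) (hd : 1 ≤ d) {i j : Fin n} (hij : i ≠ j) (m : ℕ)
    (w : invRing n d)
    (hwi : w ∣ (⟨X i ^ d, X_pow_mem n d i⟩ : invRing n d) ^ m)
    (hwj : w ∣ (⟨X j ^ d, X_pow_mem n d j⟩ : invRing n d) ^ m) :
    IsUnit w := by
  -- pass to ℂ[x]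
  have hvi : (w : MvPolynomial (Fin n) ℂ) ∣ X i ^ (d * m) := by
    obtain ⟨t, ht⟩ := hwi
    refine ⟨t, ?_⟩
    have := congrArg (Subtype.val) ht
    simpa [pow_mul] using this
  have hvj : (w : MvPolynomial (Fin n) ℂ) ∣ X j ^ (d * m) := by
    obtain ⟨t, ht⟩ := hwj
    refine ⟨t, ?_⟩
    have := congrArg (Subtype.val) ht
    simpa [pow_mul] using this
  have hunit : IsUnit (w : MvPolynomial (Fin n) ℂ) := by
    obtain ⟨k, hk, hki⟩ := (dvd_prime_pow (prime_X_mv n i) (d * m)).mp hvi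
    rcases Nat.eq_zero_or_pos k with hk0 | hk0
    · rw [hk0, pow_zero] at hki
      exact hki.symm.isUnit isUnit_one
    exfalso
    have hXiw : (X i : MvPolynomial (Fin n) ℂ) ∣ (w : MvPolynomial (Fin n) ℂ) :=
      (dvd_pow_self (X i) hk0.ne').trans hki.symm.dvd
    have hXij : (X i : MvPolynomial (Fin n) ℂ) ∣ X j ^ (d * m) := hXiw.trans hvj
    have := (prime_X_mv n i).dvd_of_dvd_pow hXij
    rw [MvPolynomial.X_dvd_X] at this
    exact hij this
  -- a unit constant, so a unit of the invariant ring
  obtain ⟨c, hc, hwc⟩ := isUnit_mv_eq_C n _ hunit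
  have hmem : (C c⁻¹ : MvPolynomial (Fin n) ℂ) ∈ invRing n d := by
    have := (invRing n d).algebraMap_mem c⁻¹
    simpa [MvPolynomial.algebraMap_eq] using this
  refine IsUnit.of_mul_eq_one (a := w) ⟨C c⁻¹, hmem⟩ ?_
  apply Subtype.ext
  show (w : MvPolynomial (Fin n) ℂ) * C c⁻¹ = 1
  rw [hwc, ← C_mul, mul_inv_cancel₀ hc, C_1]

/-- for a `ℂ`-algebra automorphism `φ` of `ℂ[x_1,…,x_n]^{μ_d}` and `i ≠ j`,
the polynomials `φ(x_i^d)` and `φ(x_j^d)` are coprime in `ℂ[x_1,…,x_n]`: every common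
divisor is a nonzero constant. -/
theorem coprime_of_invRing_automorphism (n d : ℕ) (hn : 2 ≤ n) (hd : 1 ≤ d)
    (φ : invRing n d ≃ₐ[ℂ] invRing n d) (i j : Fin n) (hij : i ≠ j)
    (p : MvPolynomial (Fin n) ℂ)
    (hpi : p ∣ (φ ⟨X i ^ d, X_pow_mem n d i⟩ : MvPolynomial (Fin n) ℂ))
    (hpj : p ∣ (φ ⟨X j ^ d, X_pow_mem n d j⟩ : MvPolynomial (Fin n) ℂ)) :
    ∃ c : ℂ, c ≠ 0 ∧ p = C c := by
  have hdpos : 0 < d := hd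
  set U : invRing n d := ⟨X i ^ d, X_pow_mem n d i⟩ with hU
  set V : invRing n d := ⟨X j ^ d, X_pow_mem n d j⟩ with hV
  set A : invRing n d := φ U with hA
  set B : invRing n d := φ V with hB
  -- A ≠ 0 and p ≠ 0
  have hU0 : U ≠ 0 := by
    intro h
    have := congrArg Subtype.val h
    exact pow_ne_zero d (X_ne_zero i) this
  have hA0 : A ≠ 0 := fun h => hU0 (by simpa using φ.injective (h.trans (map_zero φ).symm))
  have hAv0 : (A : MvPolynomial (Fin n) ℂ) ≠ 0 := fun h => hA0 (Subtype.ext h)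
  have hp0 : p ≠ 0 := by
    rintro rfl
    exact hAv0 (zero_dvd_iff.mp hpi)
  -- the set of d-th roots of unity
  set S : Finset ℂ := Polynomial.nthRootsFinset d (1 : ℂ) with hS
  have hmemS : ∀ ζ ∈ S, ζ ^ d = 1 := fun ζ hζ =>
    (Polynomial.mem_nthRootsFinset hdpos 1).mp hζ
  -- the norm of p
  set N : MvPolynomial (Fin n) ℂ := ∏ ζ ∈ S, scaleAct n ζ p with hNdef
  have hN0 : N ≠ 0 := by
    rw [hNdef]
    apply Finset.prod_ne_zero_iff.mpr
    intro ζ hζ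
    exact scaleAct_ne_zero n (Polynomial.ne_zero_of_mem_nthRootsFinset one_ne_zero hζ) hp0
  have hNmem : N ∈ invRing n d := by
    intro η hη
    have hη0 : η ≠ 0 := by
      intro h; rw [h, zero_pow hdpos.ne'] at hη; exact zero_ne_one hη
    rw [hNdef, map_prod]
    have step : ∀ ζ ∈ S, scaleAct n η (scaleAct n ζ p) = scaleAct n (η * ζ) p :=
      fun ζ _ => scaleAct_scaleAct n η ζ p
    rw [Finset.prod_congr rfl step]
    refine Finset.prod_nbij' (fun ζ => η * ζ) (fun ζ => η⁻¹ * ζ) ?_ ?_ ?_ ?_ ?_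
    · intro ζ hζ
      rw [hS, Polynomial.mem_nthRootsFinset hdpos]
      rw [mul_pow, hη, one_mul]
      exact hmemS ζ hζ
    · intro ζ hζ
      rw [hS, Polynomial.mem_nthRootsFinset hdpos]
      rw [mul_pow, inv_pow, hη, inv_one, one_mul]
      exact hmemS ζ hζ
    · intro ζ _
      show η⁻¹ * (η * ζ) = ζ
      field_simp
    · intro ζ _
      show η * (η⁻¹ * ζ) = ζ
      field_simp
    · intro ζ _; rfl
  -- N divides A^card and B^card in ℂ[x]
  have key : ∀ F : invRing n d, p ∣ (F : MvPolynomial (Fin n) ℂ) →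
      N ∣ (F : MvPolynomial (Fin n) ℂ) ^ S.card := by
    intro F hpF
    have : (F : MvPolynomial (Fin n) ℂ) ^ S.card = ∏ ζ ∈ S, scaleAct n ζ (F : MvPolynomial (Fin n) ℂ) := by
      rw [Finset.prod_congr rfl (fun ζ hζ => F.2 ζ (hmemS ζ hζ)), Finset.prod_const]
    rw [this, hNdef]
    exact Finset.prod_dvd_prod_of_dvd _ _ (fun ζ _ => map_dvd _ hpF)
  set m : ℕ := S.card with hm
  -- lift to divisibility in the invariant ring
  have hdvdA : (⟨N, hNmem⟩ : invRing n d) ∣ A ^ m := by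
    have h1 : (⟨N, hNmem⟩ : invRing n d) ∣ ⟨(A : MvPolynomial (Fin n) ℂ) ^ m, pow_mem A.2 m⟩ :=
      dvd_invRing n d hNmem (pow_mem A.2 m) hN0 (key A hpi)
    have : (A ^ m : invRing n d) = ⟨(A : MvPolynomial (Fin n) ℂ) ^ m, pow_mem A.2 m⟩ :=
      Subtype.ext (by push_cast; ring)
    rwa [this]
  have hdvdB : (⟨N, hNmem⟩ : invRing n d) ∣ B ^ m := by
    have h1 : (⟨N, hNmem⟩ : invRing n d) ∣ ⟨(B : MvPolynomial (Fin n) ℂ) ^ m, pow_mem B.2 m⟩ :=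
      dvd_invRing n d hNmem (pow_mem B.2 m) hN0 (key B hpj)
    have : (B ^ m : invRing n d) = ⟨(B : MvPolynomial (Fin n) ℂ) ^ m, pow_mem B.2 m⟩ :=
      Subtype.ext (by push_cast; ring)
    rwa [this]
  -- transport through φ⁻¹
  have hwi : φ.symm ⟨N, hNmem⟩ ∣ U ^ m := by
    have := map_dvd φ.symm hdvdA
    rwa [map_pow, hA, φ.symm_apply_apply] at this
  have hwj : φ.symm ⟨N, hNmem⟩ ∣ V ^ m := by
    have := map_dvd φ.symm hdvdB
    rwa [map_pow, hB, φ.symm_apply_apply] at this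
  have hNunitR : IsUnit (⟨N, hNmem⟩ : invRing n d) := by
    have := common_divisor_isUnit n d hd hij m (φ.symm ⟨N, hNmem⟩) hwi hwj
    have h2 := this.map φ
    rwa [φ.apply_symm_apply] at h2
  -- hence N is a unit of ℂ[x]
  have hNunit : IsUnit N := by
    obtain ⟨z, hz⟩ := isUnit_iff_exists_inv.mp hNunitR
    refine IsUnit.of_mul_eq_one (a := N) (z : MvPolynomial (Fin n) ℂ) ?_
    exact congrArg Subtype.val hz
  -- p divides N
  have hpN : p ∣ N := by
    have h1 : (1 : ℂ) ∈ S := Polynomial.one_mem_nthRootsFinset hdpos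
    have : scaleAct n 1 p ∣ N := Finset.dvd_prod_of_mem _ h1
    rwa [scaleAct_one_apply] at this
  exact isUnit_mv_eq_C n p (isUnit_of_dvd_unit hpN hNunit)
end

section
/- Let n ≥ 2 and d ≥ 1, and let ψ be a ℂ-algebra automorphism of ℂ[x_1,…,x_n] that commutes with the μ_d-action and fixes every element of the invariant ring ℂ[x_1,…,x_n]^{μ_d}. Then there exists ζ ∈ ℂ with ζ^d = 1 such that ψ(x_i) = ζ·x_i for all i = 1,…,n. -/
open MvPolynomial

lemma primeX_aux {m : ℕ} (i : Fin (m + 1)) :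
    Prime (X i : MvPolynomial (Fin (m + 1)) ℂ) := by
  let e := (renameEquiv ℂ (Equiv.swap i 0)).trans (finSuccEquiv ℂ m)
  rw [← MulEquiv.prime_iff e.toMulEquiv]
  have he : e.toMulEquiv (X i) = Polynomial.X := by
    simp [e, renameEquiv_apply, rename_X, Equiv.swap_apply_left, finSuccEquiv_X_zero]
  rw [he]
  exact Polynomial.prime_X

lemma eq_C_of_pow_eq_one {n d : ℕ} (hd : 1 ≤ d) (q : MvPolynomial (Fin n) ℂ)
    (h : q ^ d = 1) : ∃ a : ℂ, a ^ d = 1 ∧ q = C a := by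
  have prim := Complex.isPrimitiveRoot_exp d (by omega)
  have key := Polynomial.X_pow_sub_one_eq_prod (R := ℂ) (by omega : 0 < d) prim
  have key2 := congrArg (Polynomial.aeval q) key
  simp only [map_sub, map_pow, map_one, Polynomial.aeval_X, h, sub_self,
    map_prod, map_sub, Polynomial.aeval_C] at key2
  have := Finset.prod_eq_zero_iff.mp key2.symm
  obtain ⟨a, ha, haq⟩ := this
  refine ⟨a, (Polynomial.mem_nthRootsFinset (by omega) 1).mp ha, ?_⟩
  have : q - algebraMap ℂ (MvPolynomial (Fin n) ℂ) a = 0 := haq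
  rw [sub_eq_zero] at this
  rw [this, algebraMap_eq]

/-- a `ℂ`-algebra automorphism `ψ` of `ℂ[x_1,…,x_n]` commuting with the
`μ_d`-action and fixing the invariant ring pointwise is multiplication of the variables
by a single `d`-th root of unity. -/
theorem scalar_of_fixing_invRing (n d : ℕ) (hn : 2 ≤ n) (hd : 1 ≤ d)
    (ψ : MvPolynomial (Fin n) ℂ ≃ₐ[ℂ] MvPolynomial (Fin n) ℂ)
    (hcomm : ∀ ζ : ℂ, ζ ^ d = 1 → ∀ f, ψ (scaleAct n ζ f) = scaleAct n ζ (ψ f))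
    (hfix : ∀ f ∈ invRing n d, ψ f = f) :
    ∃ ζ : ℂ, ζ ^ d = 1 ∧ ∀ i : Fin n, ψ (X i) = C ζ * X i := by
  obtain ⟨m, rfl⟩ : ∃ m, n = m + 1 := ⟨n - 1, by omega⟩
  -- ψ (X i) ^ d = X i ^ d
  have hpow : ∀ i : Fin (m + 1), (ψ (X i)) ^ d = (X i) ^ d := by
    intro i
    have hmem : (X i : MvPolynomial (Fin (m + 1)) ℂ) ^ d ∈ invRing (m + 1) d := by
      intro ζ hζ
      show scaleAct (m + 1) ζ (X i ^ d) = X i ^ d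
      rw [map_pow]
      simp only [scaleAct, aeval_X]
      rw [mul_pow, ← C_pow, hζ, C_1, one_mul]
    have := hfix _ hmem
    rwa [map_pow] at this
  -- ψ (X i) = C a_i * X i
  have hform : ∀ i : Fin (m + 1), ∃ a : ℂ, a ^ d = 1 ∧ ψ (X i) = C a * X i := by
    intro i
    have hdvd : (X i : MvPolynomial (Fin (m + 1)) ℂ) ∣ (ψ (X i)) ^ d := by
      rw [hpow]; exact dvd_pow_self _ (by omega)
    obtain ⟨q, hq⟩ := (primeX_aux i).dvd_of_dvd_pow hdvd
    have hq1 : q ^ d = 1 := by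
      have h2 : (X i : MvPolynomial (Fin (m + 1)) ℂ) ^ d * q ^ d = X i ^ d * 1 := by
        rw [mul_one, ← mul_pow, ← hq, hpow]
      exact mul_left_cancel₀ (pow_ne_zero _ (X_ne_zero i)) h2
    obtain ⟨a, had, rfl⟩ := eq_C_of_pow_eq_one hd q hq1
    exact ⟨a, had, by rw [hq, mul_comm]⟩
  choose a ha hψ using hform
  -- all a_i are equal to a 0
  have hf0 : (X (0 : Fin (m + 1)) : MvPolynomial (Fin (m + 1)) ℂ) ^ (d - 1) ≠ 0 :=
    pow_ne_zero _ (X_ne_zero 0)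
  have key : ∀ j : Fin (m + 1), a j = a 0 := by
    intro j
    set f : MvPolynomial (Fin (m + 1)) ℂ := X 0 ^ (d - 1) * X j with hf
    have hfne : f ≠ 0 := mul_ne_zero hf0 (X_ne_zero j)
    have haux : ∀ c : ℂ, (C c * X (0 : Fin (m + 1))) ^ (d - 1) * (C c * X j)
        = C (c ^ (d - 1) * c) * f := by
      intro c
      rw [mul_pow, ← C_pow, C_mul, hf]; ring
    have hfmem : f ∈ invRing (m + 1) d := by
      intro ζ hζ
      show scaleAct (m + 1) ζ f = f
      rw [hf, map_mul, map_pow]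
      simp only [scaleAct, aeval_X]
      rw [haux, ← pow_succ, Nat.sub_add_cancel hd, hζ, C_1, one_mul]
    have heq : ψ f = f := hfix f hfmem
    rw [hf, map_mul, map_pow, hψ, hψ] at heq
    have heq2 : (C (a 0) * X (0 : Fin (m+1))) ^ (d-1) * (C (a j) * X j)
        = C (a 0 ^ (d - 1) * a j) * f := by
      rw [mul_pow, ← C_pow, C_mul, hf]; ring
    rw [heq2] at heq
    have heq3 : C (a 0 ^ (d - 1) * a j) * f = 1 * f := by rw [one_mul]; exact heq
    have hc : (C (a 0 ^ (d - 1) * a j) : MvPolynomial (Fin (m+1)) ℂ) = C 1 := by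
      rw [C_1]; exact mul_right_cancel₀ hfne heq3
    have hc' : a 0 ^ (d - 1) * a j = 1 := C_injective _ ℂ hc
    have h1 : a 0 ^ d = 1 := ha 0
    calc a j = (a 0 ^ d) * a j := by rw [h1, one_mul]
      _ = a 0 * (a 0 ^ (d - 1) * a j) := by
          have hsplit : a 0 ^ d = a 0 * a 0 ^ (d - 1) := by
            conv_lhs => rw [← Nat.sub_add_cancel hd]
            rw [pow_succ]; ring
          rw [hsplit]; ring
      _ = a 0 := by rw [hc', mul_one]
  exact ⟨a 0, ha 0, fun i => by rw [hψ i, key i]⟩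
end

section
/- Let A be an integral domain that is a finitely generated ℂ-algebra, with field of fractions K, and let B be the integral closure of A in K. Then every locally nilpotent ℂ-derivation D of A extends to a locally nilpotent ℂ-derivation of B, i.e. there is a locally nilpotent ℂ-derivation D' of B with D'(a) = D(a) for all a ∈ A. -/
open Polynomial

set_option linter.unusedSectionVars false
namespace LndExt

/-- the integral closure as a `ℂ`-subalgebra. -/
abbrev Bcl (A K : Type*) [CommRing A] [Algebra ℂ A] [CommRing K] [Algebra A K]
    [Algebra ℂ K] [IsScalarTower ℂ A K] : Subalgebra ℂ K :=
  Subalgebra.restrictScalars ℂ (integralClosure A K)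

variable {A : Type*} [CommRing A] [Algebra ℂ A]

lemma iter_zero (D : Derivation ℂ A A) (n : ℕ) : (⇑D)^[n] 0 = 0 := by
  induction n with
  | zero => rfl
  | succ n ih => rw [Function.iterate_succ_apply, map_zero, ih]

lemma iter_stable (D : Derivation ℂ A A) {a : A} {m : ℕ} (h : (⇑D)^[m] a = 0)
    {k : ℕ} (hk : m ≤ k) : (⇑D)^[k] a = 0 := by
  rw [← Nat.sub_add_cancel hk, Function.iterate_add_apply, h, iter_zero]

lemma iter_add (D : Derivation ℂ A A) (n : ℕ) (a b : A) :
    (⇑D)^[n] (a + b) = (⇑D)^[n] a + (⇑D)^[n] b := by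
  induction n with
  | zero => rfl
  | succ n ih => simp [Function.iterate_succ_apply', ih]

lemma iter_smul (D : Derivation ℂ A A) (n : ℕ) (c : ℂ) (a : A) :
    (⇑D)^[n] (c • a) = c • (⇑D)^[n] a := by
  induction n with
  | zero => rfl
  | succ n ih => simp [Function.iterate_succ_apply', ih]

/-- the `n`-th coefficient `Dⁿ a / n!` of the exponential of `D`. -/
noncomputable def e (D : Derivation ℂ A A) (n : ℕ) (a : A) : A :=
  ((n.factorial : ℂ))⁻¹ • (⇑D)^[n] a

lemma e_zero (D : Derivation ℂ A A) (a : A) : e D 0 a = a := by simp [e]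

lemma e_one (D : Derivation ℂ A A) (a : A) : e D 1 a = D a := by simp [e]

lemma e_add (D : Derivation ℂ A A) (n : ℕ) (a b : A) :
    e D n (a + b) = e D n a + e D n b := by simp [e, iter_add, smul_add]

lemma e_smul (D : Derivation ℂ A A) (n : ℕ) (c : ℂ) (a : A) :
    e D n (c • a) = c • e D n a := by
  simp [e, iter_smul, smul_comm c]

lemma e_eq_zero (D : Derivation ℂ A A) {m : ℕ} {a : A} (h : (⇑D)^[m] a = 0)
    {k : ℕ} (hk : m ≤ k) : e D k a = 0 := by
  simp [e, iter_stable D h hk]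

lemma D_e (D : Derivation ℂ A A) (n : ℕ) (a : A) :
    D (e D n a) = ((n : ℂ) + 1) • e D (n + 1) a := by
  have h1 : ((n + 1).factorial : ℂ) = ((n : ℂ) + 1) * (n.factorial : ℂ) := by
    rw [Nat.factorial_succ]; push_cast; ring
  have hne : ((n : ℂ) + 1) ≠ 0 := Nat.cast_add_one_ne_zero n
  have hfac : ((n.factorial : ℂ)) ≠ 0 := by
    exact_mod_cast Nat.cast_ne_zero.mpr n.factorial_ne_zero
  rw [e, D.map_smul, e, Function.iterate_succ_apply', h1, smul_smul, mul_inv,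
    ← mul_assoc, mul_inv_cancel₀ hne, one_mul]

lemma e_succ (D : Derivation ℂ A A) (n : ℕ) (a : A) :
    e D (n + 1) a = ((n : ℂ) + 1)⁻¹ • D (e D n a) := by
  have hne : ((n : ℂ) + 1) ≠ 0 := Nat.cast_add_one_ne_zero n
  rw [D_e, smul_smul, inv_mul_cancel₀ hne, one_smul]

lemma e_mul (D : Derivation ℂ A A) (n : ℕ) (a b : A) :
    e D n (a * b) = ∑ i ∈ Finset.range (n + 1), e D i a * e D (n - i) b := by
  induction n with
  | zero => simp [e_zero]
  | succ n ih =>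
    have hne : ((n : ℂ) + 1) ≠ 0 := Nat.cast_add_one_ne_zero n
    rw [e_succ, ih, map_sum]
    have hterm : ∀ i, D (e D i a * e D (n - i) b) =
        e D i a * D (e D (n - i) b) + e D (n - i) b * D (e D i a) := by
      intro i; rw [Derivation.leibniz]; simp [smul_eq_mul]
    -- rewrite each term
    set f : ℕ → A := fun j => ((n + 1 - j : ℕ) : ℂ) • (e D j a * e D (n + 1 - j) b) with hf
    set g : ℕ → A := fun j => ((j : ℕ) : ℂ) • (e D j a * e D (n + 1 - j) b) with hg
    have key : ∑ i ∈ Finset.range (n + 1), D (e D i a * e D (n - i) b)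
        = ((n : ℂ) + 1) • ∑ i ∈ Finset.range (n + 2), e D i a * e D (n + 1 - i) b := by
      have step1 : ∑ i ∈ Finset.range (n + 1), D (e D i a * e D (n - i) b)
          = ∑ i ∈ Finset.range (n + 1), (f i + g (i + 1)) := by
        refine Finset.sum_congr rfl fun i hi => ?_
        have hi' : i ≤ n := Nat.lt_succ_iff.mp (Finset.mem_range.mp hi)
        have h1 : n - i + 1 = n + 1 - i := by omega
        have h2 : n + 1 - (i + 1) = n - i := by omega
        have h3 : ((n + 1 - i : ℕ) : ℂ) = ((n - i : ℕ) : ℂ) + 1 := by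
          rw [← h1]; push_cast; ring
        rw [hterm, D_e, D_e, mul_smul_comm, mul_smul_comm, hf, hg]
        simp only [h1, h2, h3]
        rw [mul_comm (e D (n - i) b) (e D (i + 1) a)]
        push_cast
        ring_nf
      have stepf : ∑ i ∈ Finset.range (n + 2), f i = ∑ i ∈ Finset.range (n + 1), f i := by
        rw [Finset.sum_range_succ]
        have h0 : f (n + 1) = 0 := by simp [hf]
        rw [h0, add_zero]
      have stepg : ∑ i ∈ Finset.range (n + 2), g i = ∑ i ∈ Finset.range (n + 1), g (i + 1) := by
        rw [Finset.sum_range_succ']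
        have h0 : g 0 = 0 := by simp [hg]
        rw [h0, add_zero]
      rw [step1, Finset.sum_add_distrib, ← stepf, ← stepg, ← Finset.sum_add_distrib,
        Finset.smul_sum]
      refine Finset.sum_congr rfl fun j hj => ?_
      have hj' : j ≤ n + 1 := Nat.lt_succ_iff.mp (Finset.mem_range.mp hj)
      have hcast : ((n + 1 - j : ℕ) : ℂ) = ((n : ℂ) + 1) - (j : ℂ) := by
        rw [Nat.cast_sub hj']; push_cast; ring
      rw [hf, hg]
      simp only [hcast]
      rw [← add_smul]
      ring_nf
    rw [key, smul_smul, inv_mul_cancel₀ hne, one_smul]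


section Epoly

variable (D : Derivation ℂ A A) (hD : ∀ a : A, ∃ m : ℕ, 1 ≤ m ∧ (⇑D)^[m] a = 0)

/-- The exponential `exp(XD) : A → A[X]`. -/
noncomputable def Epoly (a : A) : A[X] :=
  ∑ n ∈ Finset.range ((hD a).choose + 1), Polynomial.monomial n (e D n a)

lemma coeff_Epoly (a : A) (k : ℕ) : (Epoly D hD a).coeff k = e D k a := by
  rw [Epoly, Polynomial.finset_sum_coeff]
  simp only [Polynomial.coeff_monomial]
  rw [Finset.sum_ite_eq' (Finset.range ((hD a).choose + 1)) k (fun n => e D n a)]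
  split_ifs with h
  · rfl
  · have hk : (hD a).choose ≤ k := by
      by_contra hk
      exact h (Finset.mem_range.mpr (by omega))
    exact (e_eq_zero D (hD a).choose_spec.2 hk).symm

lemma Epoly_coeff_zero (a : A) : (Epoly D hD a).coeff 0 = a := by
  rw [coeff_Epoly, e_zero]

lemma Epoly_coeff_one (a : A) : (Epoly D hD a).coeff 1 = D a := by
  rw [coeff_Epoly, e_one]

/-- `exp(XD)` as a ring homomorphism. -/
noncomputable def Erhom : A →+* A[X] where
  toFun := Epoly D hD
  map_one' := by
    ext k
    rw [coeff_Epoly, Polynomial.coeff_one]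
    rcases k with _ | k
    · simp [e_zero]
    · have h1 : (⇑D)^[1] (1 : A) = 0 := by simp
      simp [e_eq_zero D h1 (by omega : 1 ≤ k + 1)]
  map_mul' a b := by
    ext k
    rw [coeff_Epoly, Polynomial.coeff_mul, e_mul,
      Finset.Nat.sum_antidiagonal_eq_sum_range_succ_mk]
    simp only [coeff_Epoly]
  map_zero' := by
    ext k
    rw [coeff_Epoly]
    simp [e, iter_zero]
  map_add' a b := by
    ext k
    rw [Polynomial.coeff_add, coeff_Epoly, coeff_Epoly, coeff_Epoly, e_add]

lemma Erhom_algebraMap (c : ℂ) :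
    Erhom D hD (algebraMap ℂ A c) = Polynomial.C (algebraMap ℂ A c) := by
  ext k
  show (Epoly D hD _).coeff k = _
  rw [coeff_Epoly, Polynomial.coeff_C]
  rcases k with _ | k
  · simp [e_zero]
  · have h1 : (⇑D)^[1] (algebraMap ℂ A c) = 0 := by
      simp [Derivation.map_algebraMap]
    simp [e_eq_zero D h1 (by omega : 1 ≤ k + 1)]

lemma Erhom_smul (c : ℂ) (a : A) :
    Erhom D hD (c • a) = Polynomial.C (algebraMap ℂ A c) * Erhom D hD a := by
  rw [Algebra.smul_def, map_mul, Erhom_algebraMap]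

lemma Erhom_apply (a : A) : Erhom D hD a = Epoly D hD a := rfl

lemma Erhom_D (a : A) :
    Erhom D hD (D a) = Polynomial.derivative (Erhom D hD a) := by
  ext k
  rw [Erhom_apply, Erhom_apply, coeff_Epoly, Polynomial.coeff_derivative, coeff_Epoly]
  have h1 : e D k (D a) = ((k : ℂ) + 1) • e D (k + 1) a := by
    rw [← D_e, e, e, D.map_smul, ← Function.iterate_succ_apply,
      Function.iterate_succ_apply']
  rw [h1]
  calc ((k : ℂ) + 1) • e D (k + 1) a
      = ((k + 1 : ℕ) : ℂ) • e D (k + 1) a := by push_cast; ring_nf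
    _ = (k + 1 : ℕ) • e D (k + 1) a := Nat.cast_smul_eq_nsmul ℂ _ _
    _ = ((k + 1 : ℕ) : A) * e D (k + 1) a := nsmul_eq_mul _ _
    _ = e D (k + 1) a * ((k : A) + 1) := by push_cast; ring

lemma Erhom_coeff_zero (a : A) : (Erhom D hD a).coeff 0 = a := Epoly_coeff_zero D hD a

lemma Erhom_coeff_one (a : A) : (Erhom D hD a).coeff 1 = D a := Epoly_coeff_one D hD a

lemma Erhom_ne_zero {a : A} [Nontrivial A] (h : a ≠ 0) : Erhom D hD a ≠ 0 := fun hz => by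
  have := Erhom_coeff_zero D hD a
  rw [hz] at this
  exact h (by simpa using this.symm)

end Epoly


section Frac

variable (D : Derivation ℂ A A) (hD : ∀ a : A, ∃ m : ℕ, 1 ≤ m ∧ (⇑D)^[m] a = 0)
variable [IsDomain A]
variable (K : Type*) [Field K] [Algebra A K] [IsFractionRing A K]
  [Algebra ℂ K] [IsScalarTower ℂ A K]

/-- `A[X] → K[X]` mapping coefficients. -/
noncomputable def gmap : A[X] →+* K[X] := Polynomial.mapRingHom (algebraMap A K)

/-- the composition `A → A[X] → K[X] → RatFunc K`. -/
noncomputable def psi : A →+* RatFunc K :=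
  ((algebraMap K[X] (RatFunc K)).comp (gmap K)).comp (Erhom D hD)

lemma psi_apply (a : A) :
    psi D hD K a = algebraMap K[X] (RatFunc K) (gmap K (Erhom D hD a)) := rfl

lemma psi_injective : Function.Injective (psi D hD K) := by
  intro a b hab
  have h1 : gmap K (Erhom D hD a) = gmap K (Erhom D hD b) :=
    IsFractionRing.injective K[X] (RatFunc K) hab
  have h2 := congrArg (fun p => Polynomial.coeff p 0) h1
  simp only [gmap, Polynomial.coe_mapRingHom, Polynomial.coeff_map,
    Erhom_coeff_zero] at h2
  exact IsFractionRing.injective A K h2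

/-- extension of `psi` to `K`. -/
noncomputable def Psi : K →+* RatFunc K := IsFractionRing.lift (psi_injective D hD K)

lemma Psi_algebraMap (a : A) : Psi D hD K (algebraMap A K a) = psi D hD K a :=
  IsFractionRing.lift_algebraMap _ _

lemma Psi_isIntegral {b : K} (hb : b ∈ integralClosure A K) :
    IsIntegral K[X] (Psi D hD K b) := by
  obtain ⟨p, pmonic, pev⟩ := hb
  refine ⟨p.map ((gmap K).comp (Erhom D hD)), pmonic.map _, ?_⟩
  rw [Polynomial.eval₂_map]
  have hcomp : (algebraMap K[X] (RatFunc K)).comp ((gmap K).comp (Erhom D hD))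
      = (Psi D hD K).comp (algebraMap A K) := by
    ext a
    simp [psi_apply, Psi_algebraMap]
  rw [hcomp, ← Polynomial.hom_eval₂, pev, map_zero]

/-- the polynomial in `K[X]` representing `Psi b` for `b` integral. -/
noncomputable def qp (b : K) (hb : b ∈ integralClosure A K) : K[X] :=
  (IsIntegrallyClosed.isIntegral_iff.mp (Psi_isIntegral D hD K hb)).choose

lemma qp_spec (b : K) (hb : b ∈ integralClosure A K) :
    algebraMap K[X] (RatFunc K) (qp D hD K b hb) = Psi D hD K b :=
  (IsIntegrallyClosed.isIntegral_iff.mp (Psi_isIntegral D hD K hb)).choose_spec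

lemma qp_eq {b : K} {hb : b ∈ integralClosure A K} {q : K[X]}
    (h : algebraMap K[X] (RatFunc K) q = Psi D hD K b) : qp D hD K b hb = q :=
  IsFractionRing.injective K[X] (RatFunc K) ((qp_spec D hD K b hb).trans h.symm)

lemma qp_algebraMap (a : A) :
    qp D hD K (algebraMap A K a) ((integralClosure A K).algebraMap_mem a)
      = gmap K (Erhom D hD a) :=
  qp_eq D hD K (by rw [Psi_algebraMap, psi_apply])

lemma qp_add (x y : K) (hx : x ∈ integralClosure A K) (hy : y ∈ integralClosure A K) :
    qp D hD K (x + y) (add_mem hx hy) = qp D hD K x hx + qp D hD K y hy :=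
  qp_eq D hD K (by rw [map_add, qp_spec, qp_spec, map_add])

lemma qp_mul (x y : K) (hx : x ∈ integralClosure A K) (hy : y ∈ integralClosure A K) :
    qp D hD K (x * y) (mul_mem hx hy) = qp D hD K x hx * qp D hD K y hy :=
  qp_eq D hD K (by rw [map_mul, qp_spec, qp_spec, map_mul])

lemma qp_neg (x : K) (hx : x ∈ integralClosure A K) :
    qp D hD K (-x) (neg_mem hx) = -qp D hD K x hx :=
  qp_eq D hD K (by rw [map_neg, qp_spec, map_neg])

lemma qp_one : qp D hD K 1 (one_mem _) = 1 :=
  qp_eq D hD K (by rw [map_one, map_one])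

lemma qp_congr (x y : K) (hx : x ∈ integralClosure A K) (h : x = y) :
    qp D hD K y (h ▸ hx) = qp D hD K x hx := by subst h; rfl


lemma algebraMap_ne_zero {y : A} (hy : y ∈ nonZeroDivisors A) :
    algebraMap A K y ≠ 0 := by
  have : y ≠ 0 := nonZeroDivisors.ne_zero hy
  simpa using fun h => this (IsFractionRing.injective A K (by simpa using h))

lemma qp_coeff_zero (b : K) (hb : b ∈ integralClosure A K) :
    (qp D hD K b hb).coeff 0 = b := by
  obtain ⟨⟨x, y⟩, hxy⟩ := IsLocalization.surj (nonZeroDivisors A) b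
  have hmem : (b * algebraMap A K y) ∈ integralClosure A K := by
    rw [hxy]; exact (integralClosure A K).algebraMap_mem x
  have h1 : qp D hD K (b * algebraMap A K y)
        (mul_mem hb ((integralClosure A K).algebraMap_mem y.1))
      = qp D hD K b hb * gmap K (Erhom D hD y.1) := by
    rw [qp_mul D hD K b _ hb ((integralClosure A K).algebraMap_mem y.1),
      qp_algebraMap]
  have h2 : qp D hD K (b * algebraMap A K y)
        (mul_mem hb ((integralClosure A K).algebraMap_mem y.1))
      = gmap K (Erhom D hD x) := by
    rw [qp_congr D hD K (algebraMap A K x) (b * algebraMap A K y)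
        ((integralClosure A K).algebraMap_mem x) hxy.symm, qp_algebraMap]
  have h3 := h2.symm.trans h1
  have h4 := congrArg (fun p => Polynomial.coeff p 0) h3
  simp only [Polynomial.mul_coeff_zero, gmap, Polynomial.coe_mapRingHom,
    Polynomial.coeff_map, Erhom_coeff_zero] at h4
  have hy0 : algebraMap A K y ≠ 0 := algebraMap_ne_zero K y.2
  rw [← hxy] at h4
  exact (mul_right_cancel₀ hy0 h4.symm)

lemma qp_eval_isIntegral (b : K) (hb : b ∈ integralClosure A K) (c : ℂ) :
    IsIntegral A ((qp D hD K b hb).eval (algebraMap ℂ K c)) := by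
  have hb' := hb
  obtain ⟨p, pmonic, pev⟩ := hb'
  -- the relation in K[X]
  have hrel : Polynomial.eval₂ (gmap K) (qp D hD K b hb) (p.map (Erhom D hD)) = 0 := by
    apply IsFractionRing.injective K[X] (RatFunc K)
    rw [map_zero, Polynomial.hom_eval₂, qp_spec, Polynomial.eval₂_map]
    have hcomp : ((algebraMap K[X] (RatFunc K)).comp (gmap K)).comp (Erhom D hD)
        = (Psi D hD K).comp (algebraMap A K) := by
      ext a
      simp [psi_apply, Psi_algebraMap]
    rw [hcomp, ← Polynomial.hom_eval₂, pev, map_zero]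
  -- evaluate at the complex point
  set z : K := algebraMap ℂ K c with hz
  set evK : K[X] →+* K := Polynomial.evalRingHom z with hevK
  set evA : A[X] →+* A := Polynomial.evalRingHom (algebraMap ℂ A c) with hevA
  have hcomm : evK.comp (gmap K) = (algebraMap A K).comp evA := by
    apply Polynomial.ringHom_ext
    · intro a
      simp [hevK, hevA, gmap]
    · simp [hevK, hevA, gmap, hz, IsScalarTower.algebraMap_apply ℂ A K]
  have h1 : Polynomial.eval₂ (evK.comp (gmap K)) (evK (qp D hD K b hb))
      (p.map (Erhom D hD)) = 0 := by
    rw [← Polynomial.hom_eval₂, hrel, map_zero]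
  rw [hcomm] at h1
  refine ⟨(p.map (Erhom D hD)).map evA, ((pmonic.map _).map _ : _), ?_⟩
  rw [Polynomial.eval₂_map]
  exact h1

/-- any polynomial over `K` whose values at an infinite set of complex points are
integral over `A` has all coefficients integral. -/
lemma coeffs_mem : ∀ (n : ℕ) (q : K[X]), q.natDegree ≤ n →
    ∀ s : Set ℂ, s.Infinite →
    (∀ c ∈ s, q.eval (algebraMap ℂ K c) ∈ integralClosure A K) →
    ∀ k, q.coeff k ∈ integralClosure A K := by
  have hsmul : ∀ (c : ℂ) (x : K), x ∈ integralClosure A K →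
      c • x ∈ integralClosure A K := by
    intro c x hx
    rw [Algebra.smul_def, IsScalarTower.algebraMap_apply ℂ A K]
    exact mul_mem ((integralClosure A K).algebraMap_mem _) hx
  intro n
  induction n with
  | zero =>
    intro q hq s hs hev k
    obtain ⟨a, rfl⟩ := Polynomial.natDegree_eq_zero.mp (Nat.le_zero.mp hq)
    obtain ⟨c, hc⟩ := hs.nonempty
    have := hev c hc
    rw [Polynomial.eval_C] at this
    rcases k with _ | k
    · simpa using this
    · rw [Polynomial.coeff_C, if_neg (by omega)]
      exact zero_mem _
  | succ n ih =>
    intro q hq s hs hev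
    obtain ⟨z₀, hz₀⟩ := hs.nonempty
    set e₀ : K := q.eval (algebraMap ℂ K z₀) with he₀
    have he₀mem : e₀ ∈ integralClosure A K := hev z₀ hz₀
    obtain ⟨q₁, hq₁⟩ := Polynomial.X_sub_C_dvd_sub_C_eval (a := algebraMap ℂ K z₀) (p := q)
    have hqeq : q = (Polynomial.X - Polynomial.C (algebraMap ℂ K z₀)) * q₁
        + Polynomial.C e₀ := by
      rw [← hq₁]; ring
    by_cases hq1z : q₁ = 0
    · subst hq1z
      rw [mul_zero, zero_add] at hqeq
      intro k
      rw [hqeq, Polynomial.coeff_C]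
      split_ifs
      · exact he₀mem
      · exact zero_mem _
    · have hdeg : q₁.natDegree ≤ n := by
        have hXC : (Polynomial.X - Polynomial.C (algebraMap ℂ K z₀)).natDegree = 1 :=
          Polynomial.natDegree_X_sub_C _
        have h1 : ((Polynomial.X - Polynomial.C (algebraMap ℂ K z₀)) * q₁).natDegree
            = 1 + q₁.natDegree := by
          rw [Polynomial.natDegree_mul (Polynomial.X_sub_C_ne_zero _) hq1z, hXC]
        have h2 : (q - Polynomial.C e₀).natDegree ≤ n + 1 := by
          refine le_trans (Polynomial.natDegree_sub_le _ _) ?_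
          simp [hq, Polynomial.natDegree_C]
        rw [hq₁] at h2
        omega
      have hev₁ : ∀ c ∈ s \ {z₀}, q₁.eval (algebraMap ℂ K c) ∈ integralClosure A K := by
        intro c hc
        have hcz : c ≠ z₀ := by
          intro h; exact hc.2 (by simp [h])
        have hcs : c ∈ s := hc.1
        have hval : q.eval (algebraMap ℂ K c) - e₀
            = (algebraMap ℂ K c - algebraMap ℂ K z₀) * q₁.eval (algebraMap ℂ K c) := by
          conv_lhs => rw [hqeq]
          simp [Polynomial.eval_mul, Polynomial.eval_sub]
        have hne : (c - z₀ : ℂ) ≠ 0 := sub_ne_zero.mpr hcz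
        have hval' : q₁.eval (algebraMap ℂ K c)
            = (c - z₀)⁻¹ • (q.eval (algebraMap ℂ K c) - e₀) := by
          rw [hval, ← map_sub, Algebra.smul_def, ← mul_assoc, ← map_mul,
            inv_mul_cancel₀ hne, map_one, one_mul]
        rw [hval']
        exact hsmul _ _ (sub_mem (hev c hcs) he₀mem)
      have hcoeffs := ih q₁ hdeg (s \ {z₀}) (hs.diff (Set.finite_singleton z₀)) hev₁
      intro k
      rw [hqeq]
      have hXq : ((Polynomial.X - Polynomial.C (algebraMap ℂ K z₀)) * q₁)
          = Polynomial.X * q₁ - Polynomial.C (algebraMap ℂ K z₀) * q₁ := by ring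
      rw [hXq]
      simp only [Polynomial.coeff_add, Polynomial.coeff_sub, Polynomial.coeff_C_mul,
        Polynomial.coeff_C]
      have hXcoeff : (Polynomial.X * q₁).coeff k ∈ integralClosure A K := by
        rcases k with _ | k
        · simpa [Polynomial.mul_coeff_zero] using zero_mem (integralClosure A K)
        · rw [Polynomial.coeff_X_mul]
          exact hcoeffs k
      have hterm2 : algebraMap ℂ K z₀ * q₁.coeff k ∈ integralClosure A K := by
        have := hsmul z₀ _ (hcoeffs k)
        rwa [Algebra.smul_def] at this
      refine add_mem (sub_mem hXcoeff hterm2) ?_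
      split_ifs with h
      · exact he₀mem
      · exact zero_mem _


lemma qp_coeff_mem (b : K) (hb : b ∈ integralClosure A K) (k : ℕ) :
    (qp D hD K b hb).coeff k ∈ integralClosure A K :=
  coeffs_mem K (qp D hD K b hb).natDegree _ le_rfl Set.univ Set.infinite_univ
    (fun c _ => qp_eval_isIntegral D hD K b hb c) k


lemma mem_cl (b : Bcl A K) : (b : K) ∈ integralClosure A K :=
  (Subalgebra.mem_restrictScalars ℂ).mp b.2

/-- the canonical map `A → B`. -/
noncomputable def piB (a : A) : Bcl A K :=
  ⟨algebraMap A K a,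
    (Subalgebra.mem_restrictScalars ℂ).mpr ((integralClosure A K).algebraMap_mem a)⟩

/-- the polynomial representing `Psi b` for `b` in the integral closure. -/
noncomputable def qb (b : Bcl A K) : K[X] := qp D hD K (b : K) (mem_cl K b)

lemma coe_qb (b : Bcl A K) :
    algebraMap K[X] (RatFunc K) (qb D hD K b) = Psi D hD K (b : K) :=
  qp_spec D hD K _ _

lemma coe_gmap_Erhom (u : A) :
    algebraMap K[X] (RatFunc K) (gmap K (Erhom D hD u))
      = Psi D hD K (algebraMap A K u) := by
  rw [Psi_algebraMap, psi_apply]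

lemma qb_eq {b : Bcl A K} {q : K[X]}
    (h : algebraMap K[X] (RatFunc K) q = Psi D hD K (b : K)) : qb D hD K b = q :=
  IsFractionRing.injective K[X] (RatFunc K) ((coe_qb D hD K b).trans h.symm)

lemma qb_coeff_mem (b : Bcl A K) (k : ℕ) :
    (qb D hD K b).coeff k ∈ integralClosure A K :=
  qp_coeff_mem D hD K _ _ k

lemma qb_coeff_zero (b : Bcl A K) : (qb D hD K b).coeff 0 = (b : K) :=
  qp_coeff_zero D hD K _ _

lemma qb_add (x y : Bcl A K) : qb D hD K (x + y) = qb D hD K x + qb D hD K y :=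
  qb_eq D hD K (by
    have h : ((x + y : Bcl A K) : K) = (x : K) + (y : K) := rfl
    rw [map_add, coe_qb, coe_qb, h, map_add])

lemma qb_mul (x y : Bcl A K) : qb D hD K (x * y) = qb D hD K x * qb D hD K y :=
  qb_eq D hD K (by
    have h : ((x * y : Bcl A K) : K) = (x : K) * (y : K) := rfl
    rw [map_mul, coe_qb, coe_qb, h, map_mul])

lemma qb_one : qb D hD K 1 = 1 :=
  qb_eq D hD K (by
    have h : ((1 : Bcl A K) : K) = (1 : K) := rfl
    rw [map_one, h, map_one])

lemma qb_piB (a : A) : qb D hD K (piB K a) = gmap K (Erhom D hD a) :=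
  qb_eq D hD K (by
    rw [coe_gmap_Erhom]
    rfl)

lemma qb_smul (c : ℂ) (x : Bcl A K) :
    qb D hD K (c • x) = Polynomial.C (algebraMap ℂ K c) * qb D hD K x :=
  qb_eq D hD K (by
    have h1 : algebraMap K[X] (RatFunc K) (Polynomial.C (algebraMap ℂ K c))
        = Psi D hD K (algebraMap A K (algebraMap ℂ A c)) := by
      rw [← coe_gmap_Erhom D hD K (algebraMap ℂ A c)]
      congr 1
      rw [Erhom_algebraMap]
      simp [gmap, IsScalarTower.algebraMap_apply ℂ A K]
    rw [map_mul, h1, coe_qb, ← map_mul]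
    congr 1
    rw [← IsScalarTower.algebraMap_apply ℂ A K, ← Algebra.smul_def]
    rfl)

/-- the extension of `D` to the integral closure. -/
noncomputable def Dder : Derivation ℂ (Bcl A K) (Bcl A K) where
  toFun b := ⟨(qb D hD K b).coeff 1,
    (Subalgebra.mem_restrictScalars ℂ).mpr (qb_coeff_mem D hD K b 1)⟩
  map_add' x y := Subtype.ext (by
    show (qb D hD K (x + y)).coeff 1 = (qb D hD K x).coeff 1 + (qb D hD K y).coeff 1
    rw [qb_add, Polynomial.coeff_add])
  map_smul' c x := Subtype.ext (by
    have h : (qb D hD K (c • x)).coeff 1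
        = algebraMap ℂ K c * (qb D hD K x).coeff 1 := by
      rw [qb_smul, Polynomial.coeff_C_mul]
    simp only [RingHom.id_apply, SetLike.val_smul]
    conv_rhs => rw [Algebra.smul_def]
    exact h)
  map_one_eq_zero' := Subtype.ext (by
    have h : (qb D hD K (1 : Bcl A K)).coeff 1 = (0 : K) := by
      rw [qb_one, Polynomial.coeff_one]
      norm_num
    simpa using h)
  leibniz' x y := Subtype.ext (by
    have h : (qb D hD K (x * y)).coeff 1
        = (x : K) * (qb D hD K y).coeff 1 + (y : K) * (qb D hD K x).coeff 1 := by
      rw [qb_mul, Polynomial.coeff_mul, Finset.Nat.sum_antidiagonal_eq_sum_range_succ_mk,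
        Finset.sum_range_succ, Finset.sum_range_one]
      norm_num
      rw [qb_coeff_zero, qb_coeff_zero]
      ring
    simp only [smul_eq_mul, Subalgebra.coe_add, Subalgebra.coe_mul]
    exact h)

lemma Dder_coe (b : Bcl A K) : (Dder D hD K b : K) = (qb D hD K b).coeff 1 := rfl

lemma Dder_piB (a : A) : Dder D hD K (piB K a) = piB K (D a) :=
  Subtype.ext (by
    rw [Dder_coe, qb_piB]
    show (Polynomial.map (algebraMap A K) (Erhom D hD a)).coeff 1 = algebraMap A K (D a)
    rw [Polynomial.coeff_map, Erhom_coeff_one])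

lemma gmap_Erhom_ne_zero {y : A} (hy : y ∈ nonZeroDivisors A) :
    gmap K (Erhom D hD y) ≠ 0 := by
  intro h
  have h0 := congrArg (fun p => Polynomial.coeff p 0) h
  simp only [gmap, Polynomial.coe_mapRingHom, Polynomial.coeff_map, Erhom_coeff_zero,
    Polynomial.coeff_zero] at h0
  exact algebraMap_ne_zero K hy h0

lemma qb_Dder (b : Bcl A K) :
    qb D hD K (Dder D hD K b) = Polynomial.derivative (qb D hD K b) := by
  obtain ⟨⟨x, y⟩, hxy⟩ := IsLocalization.surj (nonZeroDivisors A) (b : K)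
  have hyB : b * piB K y.1 = piB K x := Subtype.ext hxy
  have hDrel := congrArg (Dder D hD K) hyB
  rw [Derivation.leibniz, Dder_piB, Dder_piB] at hDrel
  have hval : (b : K) * algebraMap A K (D y.1) + algebraMap A K y.1 * (Dder D hD K b : K)
      = algebraMap A K (D x) := by
    have := congrArg (fun z : Bcl A K => (z : K)) hDrel
    simpa [smul_eq_mul, mul_comm, piB] using this
  have hxq : gmap K (Erhom D hD x) = qb D hD K b * gmap K (Erhom D hD y.1) := by
    rw [← qb_piB D hD K x, ← qb_piB D hD K y.1, ← qb_mul, hyB]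
  have hne : gmap K (Erhom D hD y.1) ≠ 0 := gmap_Erhom_ne_zero D hD K y.2
  apply mul_left_cancel₀ hne
  have hL : gmap K (Erhom D hD y.1) * qb D hD K (Dder D hD K b)
      = gmap K (Erhom D hD (D x)) - qb D hD K b * gmap K (Erhom D hD (D y.1)) := by
    apply IsFractionRing.injective K[X] (RatFunc K)
    rw [map_mul, map_sub, map_mul, coe_qb, coe_qb, coe_gmap_Erhom, coe_gmap_Erhom,
      coe_gmap_Erhom, ← map_mul, ← map_mul, ← map_sub]
    exact congrArg (Psi D hD K) (by linear_combination hval)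
  have hR : gmap K (Erhom D hD y.1) * Polynomial.derivative (qb D hD K b)
      = gmap K (Erhom D hD (D x)) - qb D hD K b * gmap K (Erhom D hD (D y.1)) := by
    have hdx : gmap K (Erhom D hD (D x)) = Polynomial.derivative (gmap K (Erhom D hD x)) := by
      rw [Erhom_D]
      simp [gmap, Polynomial.derivative_map]
    have hdy : gmap K (Erhom D hD (D y.1))
        = Polynomial.derivative (gmap K (Erhom D hD y.1)) := by
      rw [Erhom_D]
      simp [gmap, Polynomial.derivative_map]
    rw [hdx, hdy, hxq, Polynomial.derivative_mul]
    ring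
  rw [hL, hR]

lemma qb_iter (b : Bcl A K) (m : ℕ) :
    qb D hD K ((⇑(Dder D hD K))^[m] b) = (⇑Polynomial.derivative)^[m] (qb D hD K b) := by
  induction m with
  | zero => rfl
  | succ m ih =>
    rw [Function.iterate_succ_apply', Function.iterate_succ_apply']
    rw [show (⇑(Dder D hD K)) ((⇑(Dder D hD K))^[m] b) = Dder D hD K ((⇑(Dder D hD K))^[m] b)
      from rfl, qb_Dder, ih]

lemma Dder_lnd (b : Bcl A K) :
    ∃ m : ℕ, 1 ≤ m ∧ (⇑(Dder D hD K))^[m] b = 0 := by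
  refine ⟨(qb D hD K b).natDegree + 1, by omega, ?_⟩
  apply Subtype.ext
  have h1 : (((⇑(Dder D hD K))^[(qb D hD K b).natDegree + 1] b : Bcl A K) : K)
      = (qb D hD K ((⇑(Dder D hD K))^[(qb D hD K b).natDegree + 1] b)).coeff 0 :=
    (qb_coeff_zero D hD K _).symm
  rw [h1, qb_iter, Polynomial.iterate_derivative_eq_zero (by omega)]
  simp

end Frac

end LndExt

/-- let `A` be a domain that is a finitely generated `ℂ`-algebra with
fraction field `K`, and let `B` be the integral closure of `A` in `K`. Every locally
nilpotent `ℂ`-derivation `D` of `A` extends to a locally nilpotent `ℂ`-derivation of `B`. -/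
theorem lnd_extends_to_integralClosure (A : Type*) [CommRing A] [IsDomain A] [Algebra ℂ A]
    (hfg : Algebra.FiniteType ℂ A)
    (K : Type*) [Field K] [Algebra A K] [IsFractionRing A K]
    [Algebra ℂ K] [IsScalarTower ℂ A K]
    (D : Derivation ℂ A A) (hD : ∀ a : A, ∃ m : ℕ, 1 ≤ m ∧ (⇑D)^[m] a = 0) :
    ∃ D' : Derivation ℂ (Subalgebra.restrictScalars ℂ (integralClosure A K))
        (Subalgebra.restrictScalars ℂ (integralClosure A K)),
      (∀ b, ∃ m : ℕ, 1 ≤ m ∧ (⇑D')^[m] b = 0) ∧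
      (∀ a : A,
        (↑(D' ⟨algebraMap A K a,
            (Subalgebra.mem_restrictScalars ℂ).mpr
              ((integralClosure A K).algebraMap_mem a)⟩) : K) =
          algebraMap A K (D a)) := by
  refine ⟨LndExt.Dder D hD K, fun b => LndExt.Dder_lnd D hD K b, fun a => ?_⟩
  exact congrArg (fun z : LndExt.Bcl A K => (z : K)) (LndExt.Dder_piB D hD K a)
end

section
/- Let n ≥ 2, d ≥ 1 and s ≥ 1, and set R = ℂ[x_1,…,x_n]^{μ_d} = ⊕_{k≥0} ℂ[x_1,…,x_n]_{dk} and R_s = ℂ ⊕ ⊕_{k≥s} ℂ[x_1,…,x_n]_{dk}. Then R_s is a ℂ-subalgebra of R, the extension R_s ⊆ R is integral, R_s and R have the same field of fractions, and R is integrally closed in this field; consequently R is the integral closure of R_s in its field of fractions (geometrically, the induced morphism A_{d,n} → A_{d,n}^s is the normalization). -/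
open MvPolynomial

/-- The underlying set of `R_s = ℂ ⊕ ⊕_{k≥s} ℂ[x_1,…,x_n]_{dk}`: polynomials all of whose
nonzero homogeneous components have degree `0` or degree `dk` with `k ≥ s`. -/
def RsSet (n d s : ℕ) : Set (MvPolynomial (Fin n) ℂ) :=
  {f | ∀ m : ℕ, homogeneousComponent m f ≠ 0 → m = 0 ∨ (d ∣ m ∧ d * s ≤ m)}

lemma finsupp_degree_add {n : ℕ} (v w : Fin n →₀ ℕ) :
    (v + w).degree = v.degree + w.degree := by
  simp [Finsupp.degree_eq_weight_one, map_add]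

lemma scaleAct_monomial (n : ℕ) (ζ : ℂ) (v : Fin n →₀ ℕ) (c : ℂ) :
    scaleAct n ζ (monomial v c) = C (ζ ^ v.degree) * monomial v c := by
  rw [scaleAct, aeval_monomial, monomial_eq, Finsupp.degree_apply]
  rw [Finsupp.prod, Finsupp.prod]
  simp only [mul_pow]
  rw [Finset.prod_mul_distrib, Finset.prod_pow_eq_pow_sum, ← C_pow]
  rw [show (algebraMap ℂ (MvPolynomial (Fin n) ℂ)) c = C c from rfl]
  ring

lemma scaleAct_coeff (n : ℕ) (ζ : ℂ) (f : MvPolynomial (Fin n) ℂ) (u : Fin n →₀ ℕ) :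
    coeff u (scaleAct n ζ f) = ζ ^ u.degree * coeff u f := by
  conv_lhs => rw [f.as_sum, map_sum]
  simp only [scaleAct_monomial]
  rw [coeff_sum]
  simp only [coeff_C_mul, coeff_monomial]
  rw [Finset.sum_eq_single u]
  · rw [if_pos rfl]
  · intro v _ hvu
    rw [if_neg hvu, mul_zero]
  · intro hu
    rw [notMem_support_iff] at hu
    rw [if_pos rfl, hu, mul_zero]

lemma mem_invRing_iff {n d : ℕ} (hd : 1 ≤ d) (f : MvPolynomial (Fin n) ℂ) :
    f ∈ invRing n d ↔ ∀ u ∈ f.support, d ∣ u.degree := by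
  constructor
  · intro hf u hu
    have hζ := Complex.isPrimitiveRoot_exp d (by omega)
    have h1 := hf _ (hζ.pow_eq_one)
    have h2 := congrArg (coeff u) h1
    rw [scaleAct_coeff] at h2
    rw [mem_support_iff] at hu
    have h3 : (Complex.exp (2 * Real.pi * Complex.I / d) ^ u.degree - 1) * coeff u f = 0 := by
      rw [sub_mul, one_mul, h2, sub_self]
    rcases mul_eq_zero.mp h3 with h | h
    · exact (hζ.pow_eq_one_iff_dvd _).mp (sub_eq_zero.mp h)
    · exact absurd h hu
  · intro h ζ hζ
    ext u
    rw [scaleAct_coeff]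
    by_cases hu : coeff u f = 0
    · simp [hu]
    · obtain ⟨k, hk⟩ := h u (mem_support_iff.mpr hu)
      rw [hk, pow_mul, hζ, one_pow, one_mul]

lemma mem_RsSet_iff {n d s : ℕ} (f : MvPolynomial (Fin n) ℂ) :
    f ∈ RsSet n d s ↔
      ∀ u ∈ f.support, u.degree = 0 ∨ (d ∣ u.degree ∧ d * s ≤ u.degree) := by
  constructor
  · intro h u hu
    apply h u.degree
    intro h0
    have := congrArg (coeff u) h0
    rw [coeff_homogeneousComponent, if_pos rfl] at this
    exact (mem_support_iff.mp hu) this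
  · intro h m hm
    obtain ⟨u, hu⟩ := ne_zero_iff.mp hm
    rw [coeff_homogeneousComponent] at hu
    split_ifs at hu with hdeg
    · rw [← hdeg]
      exact h u (mem_support_iff.mpr hu)
    · exact absurd rfl hu

/-- `R_s` as a `ℂ`-subalgebra. -/
noncomputable def RsAlg (n d s : ℕ) : Subalgebra ℂ (MvPolynomial (Fin n) ℂ) where
  carrier := RsSet n d s
  mul_mem' := by
    intro f g hf hg
    have hf' : f ∈ RsSet n d s := hf
    have hg' : g ∈ RsSet n d s := hg
    show f * g ∈ RsSet n d s
    rw [mem_RsSet_iff] at hf' hg' ⊢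
    intro u hu
    have := MvPolynomial.support_mul f g hu
    rw [Finset.mem_add] at this
    obtain ⟨v, hv, w, hw, rfl⟩ := this
    rw [finsupp_degree_add]
    rcases hf' v hv with h1 | ⟨h1a, h1b⟩ <;> rcases hg' w hw with h2 | ⟨h2a, h2b⟩
    · left; omega
    · right; rw [h1, zero_add]; exact ⟨h2a, h2b⟩
    · right; rw [h2, add_zero]; exact ⟨h1a, h1b⟩
    · right; exact ⟨dvd_add h1a h2a, le_trans h1b (Nat.le_add_right _ _)⟩
  add_mem' := by
    intro f g hf hg
    have hf' : f ∈ RsSet n d s := hf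
    have hg' : g ∈ RsSet n d s := hg
    show f + g ∈ RsSet n d s
    rw [mem_RsSet_iff] at hf' hg' ⊢
    intro u hu
    rcases Finset.mem_union.mp (MvPolynomial.support_add hu) with h | h
    · exact hf' u h
    · exact hg' u h
  algebraMap_mem' := by
    intro c
    show C c ∈ RsSet n d s
    rw [mem_RsSet_iff]
    intro u hu
    rw [C_apply] at hu
    have hu0 : u = 0 := Finset.mem_singleton.mp (support_monomial_subset hu)
    left
    rw [hu0]
    exact map_zero _

lemma mem_RsAlg_iff {n d s : ℕ} (f : MvPolynomial (Fin n) ℂ) :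
    f ∈ RsAlg n d s ↔ f ∈ RsSet n d s := Iff.rfl

lemma homogeneous_degree_mem_RsAlg {n d s : ℕ} (g : MvPolynomial (Fin n) ℂ) (m : ℕ)
    (hg : g.IsHomogeneous m) (hm : m = 0 ∨ (d ∣ m ∧ d * s ≤ m)) : g ∈ RsAlg n d s := by
  rw [mem_RsAlg_iff, mem_RsSet_iff]
  intro u hu
  have : u.degree = m := by
    by_contra hne
    exact (mem_support_iff.mp hu) (hg.coeff_eq_zero hne)
  rw [this]; exact hm

set_option maxHeartbeats 1000000 in
set_option synthInstance.maxHeartbeats 400000 in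
/-- `R_s = ℂ ⊕ ⊕_{k≥s} ℂ[x_1,…,x_n]_{dk}` is a `ℂ`-subalgebra of
`R = ℂ[x_1,…,x_n]^{μ_d}`, the extension `R_s ⊆ R` is integral, `R_s` and `R` have the same
field of fractions, and `R` is integrally closed; hence `R` is the integral closure of
`R_s` in its field of fractions. -/
theorem invRing_is_normalization_of_Rs (n d s : ℕ) (hn : 2 ≤ n) (hd : 1 ≤ d) (hs : 1 ≤ s) :
    ∃ B : Subalgebra ℂ (MvPolynomial (Fin n) ℂ),
      (B : Set (MvPolynomial (Fin n) ℂ)) = RsSet n d s ∧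
      B ≤ invRing n d ∧
      (∀ f ∈ invRing n d, IsIntegral B f) ∧
      (∀ f ∈ invRing n d, ∃ p ∈ B, ∃ q ∈ B, q ≠ 0 ∧ q * f = p) ∧
      IsIntegrallyClosed (invRing n d) := by
  refine ⟨RsAlg n d s, ?_, ?_, ?_, ?_, ?_⟩
  · ext f
    exact mem_RsAlg_iff f
  · -- B ≤ invRing
    intro f hf
    rw [mem_RsAlg_iff, mem_RsSet_iff] at hf
    rw [mem_invRing_iff hd]
    intro u hu
    rcases hf u hu with h | ⟨h, _⟩
    · rw [h]; exact dvd_zero d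
    · exact h
  · -- integrality
    intro f hf
    rw [mem_invRing_iff hd] at hf
    rw [← sum_homogeneousComponent f]
    apply IsIntegral.sum
    intro i _
    set g := homogeneousComponent i f with hg
    by_cases hg0 : g = 0
    · rw [hg0]; exact isIntegral_zero
    · have hhom : g.IsHomogeneous i := homogeneousComponent_isHomogeneous i f
      have hdi : d ∣ i := by
        obtain ⟨u, hu⟩ := ne_zero_iff.mp hg0
        rw [hg, coeff_homogeneousComponent] at hu
        split_ifs at hu with hdeg
        · rw [← hdeg]; exact hf u (mem_support_iff.mpr hu)
        · exact absurd rfl hu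
      have hgs : g ^ s ∈ RsAlg n d s := by
        apply homogeneous_degree_mem_RsAlg (g ^ s) (i * s) (hhom.pow s)
        rcases Nat.eq_zero_or_pos i with h0 | hpos
        · left; rw [h0, zero_mul]
        · right
          obtain ⟨k, rfl⟩ := hdi
          have hk : 1 ≤ k := by
            rcases Nat.eq_zero_or_pos k with rfl | h
            · simp at hpos
            · exact h
          exact ⟨Dvd.dvd.mul_right (dvd_mul_right d k) s,
            Nat.mul_le_mul_right s (Nat.le_mul_of_pos_right d hk)⟩
      refine ⟨Polynomial.X ^ s - Polynomial.C (⟨g ^ s, hgs⟩ : RsAlg n d s),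
        Polynomial.monic_X_pow_sub_C _ (by omega), ?_⟩
      show Polynomial.eval₂ (algebraMap (RsAlg n d s) (MvPolynomial (Fin n) ℂ)) g
          (Polynomial.X ^ s - Polynomial.C (⟨g ^ s, hgs⟩ : RsAlg n d s)) = 0
      rw [Polynomial.eval₂_sub, Polynomial.eval₂_X_pow, Polynomial.eval₂_C]
      have hmap : (algebraMap (RsAlg n d s) (MvPolynomial (Fin n) ℂ))
          (⟨g ^ s, hgs⟩ : RsAlg n d s) = g ^ s := rfl
      rw [hmap, sub_self]
  · -- same fraction field
    intro f hf
    rw [mem_invRing_iff hd] at hf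
    set i0 : Fin n := ⟨0, by omega⟩
    set q : MvPolynomial (Fin n) ℂ := X i0 ^ (d * s) with hq
    have hq_hom : q.IsHomogeneous (d * s) := by
      have := (isHomogeneous_X ℂ i0).pow (d * s)
      rwa [one_mul] at this
    have hqB : q ∈ RsAlg n d s := by
      apply homogeneous_degree_mem_RsAlg q (d * s) hq_hom
      right; exact ⟨dvd_mul_right d s, le_refl _⟩
    refine ⟨q * f, ?_, q, hqB, ?_, rfl⟩
    · rw [mem_RsAlg_iff, mem_RsSet_iff]
      intro u hu
      have := MvPolynomial.support_mul q f hu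
      rw [Finset.mem_add] at this
      obtain ⟨v, hv, w, hw, rfl⟩ := this
      rw [finsupp_degree_add]
      have hvdeg : v.degree = d * s := by
        by_contra hne
        exact (mem_support_iff.mp hv) (hq_hom.coeff_eq_zero hne)
      right
      rw [hvdeg]
      exact ⟨dvd_add (dvd_mul_right d s) (hf w hw), Nat.le_add_right _ _⟩
    · exact pow_ne_zero _ (X_ne_zero i0)
  · -- integrally closed
    set A := invRing n d with hA
    rw [isIntegrallyClosed_iff (FractionRing A)]
    intro x hx
    set P := MvPolynomial (Fin n) ℂ with hP
    let g : A →+* FractionRing P := (algebraMap P (FractionRing P)).comp (A.val : A →ₐ[ℂ] P)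
    have hginj : Function.Injective g :=
      (IsFractionRing.injective P (FractionRing P)).comp Subtype.coe_injective
    set φ : FractionRing A →+* FractionRing P := IsFractionRing.lift hginj with hφ
    have hφalg : ∀ y : A, φ (algebraMap A (FractionRing A) y) = g y := fun y =>
      IsFractionRing.lift_algebraMap hginj y
    -- φ x is integral over P
    have hφx : IsIntegral P (φ x) := by
      obtain ⟨p, pmon, hp⟩ := hx
      refine ⟨p.map ((A.val : A →ₐ[ℂ] P) : A →+* P), pmon.map _, ?_⟩
      rw [Polynomial.eval₂_map]
      have hcomp : (algebraMap P (FractionRing P)).comp ((A.val : A →ₐ[ℂ] P) : A →+* P)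
          = φ.comp (algebraMap A (FractionRing A)) := by
        ext y
        simp only [RingHom.comp_apply]
        exact (hφalg y).symm
      rw [hcomp, ← Polynomial.hom_eval₂]
      have hp' : (Polynomial.aeval x) p = 0 := hp
      rw [show Polynomial.eval₂ (algebraMap (↥A) (FractionRing ↥A)) x p
        = (Polynomial.aeval x) p from rfl, hp', map_zero]
    obtain ⟨c, hc⟩ := IsIntegrallyClosed.isIntegral_iff.mp hφx
    obtain ⟨⟨a, b⟩, hab⟩ := IsLocalization.surj (nonZeroDivisors A) x
    have hbne : (b : A) ≠ 0 := nonZeroDivisors.ne_zero b.2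
    have hbne' : ((b : A) : P) ≠ 0 := fun h => hbne (Subtype.coe_injective h)
    -- c * b = a in P
    have hcb : c * ((b : A) : P) = (a : P) := by
      apply IsFractionRing.injective P (FractionRing P)
      have h1 := congrArg φ hab
      rw [map_mul, hφalg, hφalg] at h1
      rw [map_mul]
      calc (algebraMap P (FractionRing P)) c * (algebraMap P (FractionRing P)) ((b : A) : P)
          = φ x * g (b : A) := by rw [hc]; rfl
        _ = g a := h1
        _ = (algebraMap P (FractionRing P)) (a : P) := rfl
    -- c is invariant
    have hcA : c ∈ A := by
      intro ζ hζ
      have h1 := congrArg (scaleAct n ζ) hcb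
      rw [map_mul] at h1
      have hbinv : scaleAct n ζ ((b : A) : P) = ((b : A) : P) := (b : A).2 ζ hζ
      have hainv : scaleAct n ζ ((a : A) : P) = ((a : A) : P) := a.2 ζ hζ
      rw [hbinv, hainv, ← hcb] at h1
      exact mul_right_cancel₀ hbne' h1
    refine ⟨⟨c, hcA⟩, ?_⟩
    apply φ.injective
    rw [hφalg]
    have hgc : g (⟨c, hcA⟩ : A) = (algebraMap P (FractionRing P)) c := rfl
    rw [hgc, hc]
end

section
/- Let d ≥ 1, let l ≥ 1, and let d_1,…,d_l and k_1,…,k_l be positive integers with d ∣ d_i for all i. Let S ⊆ ℕ be the additive submonoid generated by the set {k·d_i : 1 ≤ i ≤ l, k ≥ k_i}, and suppose that for every i and every k ≥ 1 one has k_i·d_i + k·d ∈ S. Then S = {0} ∪ {m ∈ ℕ : d ∣ m and m ≥ min_i (k_i·d_i)}. -/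
/-- let `d ∣ d_i`, and let `S ⊆ ℕ` be the additive submonoid generated by
`{k·d_i : k ≥ k_i}`; if moreover `k_i·d_i + k·d ∈ S` for all `i` and all `k ≥ 1`, then
`S = {0} ∪ {m : d ∣ m and m ≥ min_i k_i·d_i}`. -/
theorem degree_monoid_eq (d l : ℕ) (hd : 1 ≤ d) (hl : 1 ≤ l)
    (ds ks : Fin l → ℕ) (hds : ∀ i, 1 ≤ ds i) (hks : ∀ i, 1 ≤ ks i)
    (hdvd : ∀ i, d ∣ ds i)
    (S : AddSubmonoid ℕ)
    (hS : S = AddSubmonoid.closure {m : ℕ | ∃ (i : Fin l) (k : ℕ), ks i ≤ k ∧ m = k * ds i})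
    (hplus : ∀ (i : Fin l) (k : ℕ), 1 ≤ k → ks i * ds i + k * d ∈ S) :
    (S : Set ℕ) = {0} ∪ {m : ℕ | d ∣ m ∧ ∃ i : Fin l, ks i * ds i ≤ m} := by
  ext m
  simp only [Set.mem_union, Set.mem_singleton_iff, Set.mem_setOf_eq, SetLike.mem_coe]
  constructor
  · intro hm
    rw [hS] at hm
    induction hm using AddSubmonoid.closure_induction with
    | mem x hx =>
      obtain ⟨i, k, hk, rfl⟩ := hx
      exact Or.inr ⟨Dvd.dvd.mul_left (hdvd i) k, i, Nat.mul_le_mul_right _ hk⟩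
    | zero => exact Or.inl rfl
    | add x y hx hy ihx ihy =>
      rcases ihx with rfl | ⟨hdx, i, hix⟩
      · simpa using ihy
      rcases ihy with rfl | ⟨hdy, j, hjy⟩
      · exact Or.inr ⟨by simpa using hdx, i, by simpa using hix⟩
      · exact Or.inr ⟨dvd_add hdx hdy, i, le_trans hix (Nat.le_add_right _ _)⟩
  · rintro (rfl | ⟨hdm, i, him⟩)
    · exact S.zero_mem
    · rcases eq_or_lt_of_le him with heq | hlt
      · rw [hS]; exact AddSubmonoid.subset_closure ⟨i, ks i, le_refl _, heq.symm⟩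
      · obtain ⟨k, hk⟩ := Nat.dvd_sub hdm ((hdvd i).mul_left (ks i))
        have hk1 : 1 ≤ k := by
          rcases Nat.eq_zero_or_pos k with rfl | h
          · omega
          · exact h
        have hm' : m = ks i * ds i + k * d := by
          have := Nat.mul_comm d k; omega
        rw [hm']; exact hplus i k hk1
end
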